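/- Let S be a seminormal affine monoid with cone C and p a prime. A face D ⊊ C is a maximal p-face (D is a p-face and no strictly larger face is a p-face) if and only if D is a maximal pRUF. -/

import Mathlib

noncomputable section


noncomputable section

def emb (d : ℕ) : (Fin d → ℤ) →+ (Fin d → ℝ) where
  toFun m := fun i => (m i : ℝ)
  map_zero' := by ext i; simp
  map_add' x y := by ext i; simp [Pi.add_apply]

def IsFace (d : ℕ) (C D : Set (Fin d → ℝ)) : Prop :=
  ∃ u : (Fin d → ℝ) →ₗ[ℝ] ℝ, (∀ x ∈ C, 0 ≤ u x) ∧ D = {x ∈ C | u x = 0}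

def latticeOf (d : ℕ) (S : AddSubmonoid (Fin d → ℤ)) (D : Set (Fin d → ℝ)) :
    AddSubgroup (Fin d → ℤ) :=
  AddSubgroup.closure ((S : Set (Fin d → ℤ)) ∩ (emb d) ⁻¹' D)

def latIn (d : ℕ) (D : Set (Fin d → ℝ)) : AddSubgroup (Fin d → ℤ) :=
  AddSubgroup.comap (emb d) (Submodule.span ℝ D).toAddSubgroup

def IsRelSat (d : ℕ) (S : AddSubmonoid (Fin d → ℤ)) (C D : Set (Fin d → ℝ)) : Prop :=
  IsFace d C D ∧ D ≠ C ∧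
    latticeOf d S D =
      (⨅ D' ∈ {D' : Set (Fin d → ℝ) | IsFace d C D' ∧ D ⊂ D'}, latticeOf d S D') ⊓ latIn d D

def IsRUF (d : ℕ) (S : AddSubmonoid (Fin d → ℤ)) (C D : Set (Fin d → ℝ)) : Prop :=
  IsFace d C D ∧ ¬ IsRelSat d S C D

def Seminormal (d : ℕ) (S : AddSubmonoid (Fin d → ℤ)) (C : Set (Fin d → ℝ)) : Prop :=
  ∀ D : Set (Fin d → ℝ), IsFace d C D →
    ∀ m : Fin d → ℤ, emb d m ∈ intrinsicInterior ℝ D → (m ∈ S ↔ m ∈ latticeOf d S D)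

def coneOf (d : ℕ) (S : AddSubmonoid (Fin d → ℤ)) : Set (Fin d → ℝ) :=
  ↑(Submodule.span NNReal (emb d '' (S : Set (Fin d → ℤ))))

def pFace (d p : ℕ) (S : AddSubmonoid (Fin d → ℤ)) (D : Set (Fin d → ℝ)) : Prop :=
  p ∣ (latticeOf d S D).relIndex (latIn d D)

def Mtilde (d p : ℕ) (S : AddSubmonoid (Fin d → ℤ)) (D : Set (Fin d → ℝ)) : Set (Fin d → ℤ) :=
  {x | x ∈ latIn d D ∧ ∃ m : ℤ, IsCoprime m (p : ℤ) ∧ m • x ∈ latticeOf d S D}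


lemma face_subset {d : ℕ} {C D : Set (Fin d → ℝ)} (h : IsFace d C D) : D ⊆ C := by
  obtain ⟨u, hu, rfl⟩ := h; exact Set.sep_subset _ _

lemma isFace_self (d : ℕ) (C : Set (Fin d → ℝ)) : IsFace d C C :=
  ⟨0, fun x _ => le_rfl, by ext x; simp⟩

lemma latticeOf_le_latIn (d : ℕ) (S : AddSubmonoid (Fin d → ℤ)) (D : Set (Fin d → ℝ)) :
    latticeOf d S D ≤ latIn d D := by
  rw [latticeOf, AddSubgroup.closure_le]
  intro x hx
  exact Submodule.subset_span hx.2

lemma latticeOf_mono {d : ℕ} (S : AddSubmonoid (Fin d → ℤ)) {D D' : Set (Fin d → ℝ)}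
    (h : D ⊆ D') : latticeOf d S D ≤ latticeOf d S D' :=
  AddSubgroup.closure_mono (Set.inter_subset_inter_right _ (Set.preimage_mono h))

lemma latIn_mono {d : ℕ} {D D' : Set (Fin d → ℝ)} (h : D ⊆ D') : latIn d D ≤ latIn d D' :=
  AddSubgroup.comap_mono (Submodule.toAddSubgroup_mono (Submodule.span_mono h))

lemma latticeOf_self {d : ℕ} {S : AddSubmonoid (Fin d → ℤ)} {C : Set (Fin d → ℝ)}
    (hZ : AddSubgroup.closure (S : Set (Fin d → ℤ)) = ⊤) (hC : C = coneOf d S) :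
    latticeOf d S C = ⊤ := by
  rw [eq_top_iff, ← hZ]
  apply AddSubgroup.closure_mono
  intro s hs
  refine ⟨hs, ?_⟩
  rw [Set.mem_preimage, hC]
  exact Submodule.subset_span (Set.mem_image_of_mem _ hs)

lemma not_pFace_self {d p : ℕ} {S : AddSubmonoid (Fin d → ℤ)} {C : Set (Fin d → ℝ)}
    (hp : p.Prime) (hZ : AddSubgroup.closure (S : Set (Fin d → ℤ)) = ⊤) (hC : C = coneOf d S) :
    ¬ pFace d p S C := by
  rw [pFace, latticeOf_self hZ hC, AddSubgroup.relIndex_top_left, Nat.dvd_one]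
  exact hp.ne_one

lemma span_face_sub {d : ℕ} {S : AddSubmonoid (Fin d → ℤ)} {C D : Set (Fin d → ℝ)}
    (hC : C = coneOf d S) (hD : IsFace d C D) :
    D ⊆ (Submodule.span ℝ (emb d '' ((S : Set (Fin d → ℤ)) ∩ emb d ⁻¹' D)) : Set (Fin d → ℝ)) := by
  obtain ⟨u, hu, hDdef⟩ := hD
  set V : Submodule ℝ (Fin d → ℝ) :=
    Submodule.span ℝ (emb d '' ((S : Set (Fin d → ℤ)) ∩ emb d ⁻¹' D)) with hV
  intro y hy
  have hyC : y ∈ C := (hDdef ▸ hy).1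
  have huy : u y = 0 := (hDdef ▸ hy).2
  have hyspan : y ∈ Submodule.span NNReal (emb d '' (S : Set (Fin d → ℤ))) := by
    rw [hC] at hyC; exact hyC
  have key : ∀ z ∈ Submodule.span NNReal (emb d '' (S : Set (Fin d → ℤ))),
      0 ≤ u z ∧ (u z = 0 → z ∈ V) := by
    intro z hz
    induction hz using Submodule.span_induction with
    | mem w hw =>
      obtain ⟨s, hs, rfl⟩ := hw
      have hwc : emb d s ∈ C := by
        rw [hC]; exact Submodule.subset_span (Set.mem_image_of_mem _ hs)
      refine ⟨hu _ hwc, fun h0 => ?_⟩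
      exact Submodule.subset_span ⟨s, ⟨hs, by rw [Set.mem_preimage, hDdef]; exact ⟨hwc, h0⟩⟩, rfl⟩
    | zero => simp
    | add a b _ _ ha hb =>
      refine ⟨by simpa using add_nonneg ha.1 hb.1, fun h0 => ?_⟩
      rw [map_add] at h0
      have h1 : u a = 0 := le_antisymm (by linarith [hb.1]) ha.1
      have h2 : u b = 0 := le_antisymm (by linarith [ha.1]) hb.1
      exact Submodule.add_mem _ (ha.2 h1) (hb.2 h2)
    | smul c a _ ha =>
      rw [NNReal.smul_def, map_smul, smul_eq_mul]
      refine ⟨mul_nonneg c.2 ha.1, fun h0 => ?_⟩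
      rcases mul_eq_zero.mp h0 with h | h
      · rw [h, zero_smul]; exact Submodule.zero_mem _
      · exact Submodule.smul_mem _ _ (ha.2 h)
  exact (key y hyspan).2 huy

lemma span_strict {d : ℕ} {C D D' : Set (Fin d → ℝ)}
    (hD : IsFace d C D) (hD' : IsFace d C D') (h : D ⊂ D') :
    Submodule.span ℝ D < Submodule.span ℝ D' := by
  obtain ⟨u, hu, hDdef⟩ := hD
  obtain ⟨x, hxD', hxD⟩ := Set.exists_of_ssubset h
  have hxC : x ∈ C := face_subset hD' hxD'
  have hux : u x ≠ 0 := fun h0 => hxD (hDdef ▸ ⟨hxC, h0⟩)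
  refine lt_of_le_of_ne (Submodule.span_mono h.le) (fun heq => ?_)
  have hxspan : x ∈ Submodule.span ℝ D := heq ▸ Submodule.subset_span hxD'
  have : Submodule.span ℝ D ≤ LinearMap.ker u := by
    rw [Submodule.span_le]; intro z hz; exact (hDdef ▸ hz).2
  exact hux (this hxspan)

def embQ (d : ℕ) : (Fin d → ℤ) →+ (Fin d → ℚ) where
  toFun m := fun i => (m i : ℚ)
  map_zero' := by ext i; simp
  map_add' x y := by ext i; simp [Pi.add_apply]

lemma embQ_injective (d : ℕ) : Function.Injective (embQ d) := by
  intro a b h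
  funext i
  have : ((a i : ℚ)) = (b i : ℚ) := congrFun h i
  exact_mod_cast this

lemma embQ_eq_sum {d : ℕ} (m : Fin d → ℤ) :
    embQ d m = ∑ i : Fin d, (m i : ℚ) • (Pi.single i 1 : Fin d → ℚ) := by
  funext j
  rw [Finset.sum_apply]
  simp [Pi.single_apply, embQ]

lemma rat_descent {d : ℕ} {T : Set (Fin d → ℤ)} {x : Fin d → ℤ}
    (hx : emb d x ∈ Submodule.span ℝ (emb d '' T)) :
    embQ d x ∈ Submodule.span ℚ (embQ d '' T) := by
  by_contra h
  obtain ⟨φ, hφx, hφmap⟩ :=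
    Submodule.exists_dual_map_eq_bot_of_notMem h inferInstance
  have hφ0 : ∀ v ∈ Submodule.span ℚ (embQ d '' T), φ v = 0 := by
    intro v hv
    have : φ v ∈ (Submodule.span ℚ (embQ d '' T)).map φ := Submodule.mem_map_of_mem hv
    rw [hφmap] at this
    exact this
  set ψ : (Fin d → ℝ) →ₗ[ℝ] ℝ :=
    ∑ i : Fin d, (φ (Pi.single i (1 : ℚ)) : ℝ) • (LinearMap.proj i) with hψ
  have hkey : ∀ m : Fin d → ℤ, ψ (emb d m) = ((φ (embQ d m) : ℚ) : ℝ) := by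
    intro m
    rw [embQ_eq_sum, map_sum]
    simp only [map_smul, smul_eq_mul]
    rw [hψ]
    simp only [LinearMap.sum_apply, LinearMap.smul_apply, LinearMap.proj_apply, smul_eq_mul]
    have : ∀ i, (emb d) m i = ((m i : ℤ) : ℝ) := fun i => rfl
    simp only [this]
    push_cast
    exact Finset.sum_congr rfl fun i _ => mul_comm _ _
  have hker : Submodule.span ℝ (emb d '' T) ≤ LinearMap.ker ψ := by
    rw [Submodule.span_le]
    rintro _ ⟨t, ht, rfl⟩
    have : φ (embQ d t) = 0 := hφ0 _ (Submodule.subset_span (Set.mem_image_of_mem _ ht))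
    simp [LinearMap.mem_ker, hkey t, this]
  have : ψ (emb d x) = 0 := hker hx
  rw [hkey x] at this
  exact hφx (by exact_mod_cast this)

lemma clear_denominators {d : ℕ} {T : Set (Fin d → ℤ)} {x : Fin d → ℤ}
    (hx : embQ d x ∈ Submodule.span ℚ (embQ d '' T)) :
    ∃ n : ℕ, 0 < n ∧ (n • x) ∈ AddSubgroup.closure T := by
  rw [Submodule.mem_span_set'] at hx
  obtain ⟨k, q, v, hsum⟩ := hx
  -- choose preimages
  have hch : ∀ i : Fin k, ∃ t ∈ T, embQ d t = (v i : Fin d → ℚ) := fun i => by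
    obtain ⟨t, ht, hte⟩ := (v i).2
    exact ⟨t, ht, hte⟩
  choose t ht hte using hch
  set n : ℕ := ∏ i : Fin k, (q i).den with hn
  have hnpos : 0 < n := Finset.prod_pos fun i _ => (q i).pos
  -- integer coefficients
  have hden : ∀ i : Fin k, ((q i).den : ℕ) ∣ n := fun i =>
    Finset.dvd_prod_of_mem _ (Finset.mem_univ i)
  set c : Fin k → ℤ := fun i => (q i).num * ((n / (q i).den : ℕ) : ℤ) with hc
  have hcq : ∀ i : Fin k, (c i : ℚ) = q i * n := by
    intro i
    have h1 : ((q i).den : ℚ) ≠ 0 := by exact_mod_cast (q i).den_nz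
    have h2 : ((n / (q i).den : ℕ) : ℚ) = (n : ℚ) / ((q i).den : ℚ) :=
      Nat.cast_div (hden i) h1
    rw [hc, Int.cast_mul, Int.cast_natCast, h2]
    field_simp
    rw [mul_comm, Rat.mul_den_eq_num]
  have key : embQ d (∑ i : Fin k, c i • t i) = embQ d (n • x) := by
    rw [map_nsmul, map_sum, ← hsum]
    rw [← Nat.cast_smul_eq_nsmul ℚ n, Finset.smul_sum]
    refine Finset.sum_congr rfl fun i _ => ?_
    rw [map_zsmul, hte i, ← Int.cast_smul_eq_zsmul ℚ, hcq i, smul_smul, mul_comm]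
  have heq := embQ_injective d key
  refine ⟨n, hnpos, ?_⟩
  rw [← heq]
  exact AddSubgroup.sum_mem _ fun i _ =>
    AddSubgroup.zsmul_mem _ (AddSubgroup.subset_closure (ht i)) _

lemma fg_subgroup {d : ℕ} (K : AddSubgroup (Fin d → ℤ)) : AddGroup.FG ↥K := by
  have : Module.Finite ℤ ↥(AddSubgroup.toIntSubmodule K) :=
    Module.Finite.iff_fg.mpr (IsNoetherian.noetherian _)
  exact Module.Finite.iff_addGroup_fg.mp this

lemma relindex_ne_zero {d : ℕ} {S : AddSubmonoid (Fin d → ℤ)} {C D : Set (Fin d → ℝ)}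
    (hC : C = coneOf d S) (hD : IsFace d C D) :
    (latticeOf d S D).relIndex (latIn d D) ≠ 0 := by
  set K := latIn d D
  set L := latticeOf d S D
  set H := L.addSubgroupOf K with hH
  have hfin : Finite (↥K ⧸ H) := by
    haveI : AddGroup.FG ↥K := fg_subgroup K
    haveI : AddGroup.FG (↥K ⧸ H) := AddGroup.fg_of_surjective (QuotientAddGroup.mk'_surjective H)
    apply AddCommGroup.finite_of_fg_torsion
    intro q
    obtain ⟨y, rfl⟩ := QuotientAddGroup.mk'_surjective H q
    have hy : emb d (y : Fin d → ℤ) ∈ Submodule.span ℝ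
        (emb d '' ((S : Set (Fin d → ℤ)) ∩ emb d ⁻¹' D)) := by
      have h1 : emb d (y : Fin d → ℤ) ∈ Submodule.span ℝ D := y.2
      exact Submodule.span_le.mpr (span_face_sub hC hD) h1
    obtain ⟨n, hn, hmem⟩ := clear_denominators (rat_descent hy)
    rw [isOfFinAddOrder_iff_nsmul_eq_zero]
    refine ⟨n, hn, ?_⟩
    rw [← map_nsmul]
    rw [QuotientAddGroup.mk'_apply, QuotientAddGroup.eq_zero_iff]
    rw [AddSubgroup.mem_addSubgroupOf]
    exact hmem
  exact AddSubgroup.index_ne_zero_of_finite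

lemma core {d p : ℕ} (hp : p.Prime) {S : AddSubmonoid (Fin d → ℤ)} {C D : Set (Fin d → ℝ)}
    (hC : C = coneOf d S) (hD : IsFace d C D)
    (hsat : IsRelSat d S C D)
    (hmax : ∀ E : Set (Fin d → ℝ), IsFace d C E → D ⊂ E → ¬ pFace d p S E) :
    ¬ pFace d p S D := by
  intro hpf
  obtain ⟨-, -, heq⟩ := hsat
  set K := latIn d D with hK
  set L := latticeOf d S D with hL
  set H := L.addSubgroupOf K with hH
  have hne : L.relIndex K ≠ 0 := relindex_ne_zero hC hD
  have hfin : Finite (↥K ⧸ H) := by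
    have : Nat.card (↥K ⧸ H) ≠ 0 := hne
    exact (Nat.card_ne_zero.mp this).2
  haveI : Fintype (↥K ⧸ H) := Fintype.ofFinite _
  have hdvd : p ∣ Fintype.card (↥K ⧸ H) := by
    rw [← Nat.card_eq_fintype_card]
    exact hpf
  haveI : Fact p.Prime := ⟨hp⟩
  obtain ⟨q, hq⟩ := exists_prime_addOrderOf_dvd_card p hdvd
  obtain ⟨y, rfl⟩ := QuotientAddGroup.mk'_surjective H q
  -- p • y ∈ L
  have hpy : (p : ℕ) • (y : Fin d → ℤ) ∈ L := by
    have : (p : ℕ) • (QuotientAddGroup.mk' H y) = 0 := by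
      rw [← hq]; exact addOrderOf_nsmul_eq_zero _
    rw [← map_nsmul, QuotientAddGroup.mk'_apply, QuotientAddGroup.eq_zero_iff,
      AddSubgroup.mem_addSubgroupOf] at this
    exact this
  -- y ∈ L
  have hyL : (y : Fin d → ℤ) ∈ L := by
    rw [heq]
    refine AddSubgroup.mem_inf.mpr ⟨?_, y.2⟩
    rw [AddSubgroup.mem_iInf]
    intro E
    rw [AddSubgroup.mem_iInf]
    rintro ⟨hEface, hDE⟩
    set nE := (latticeOf d S E).relIndex (latIn d E) with hnE
    have hpnE : ¬ (p ∣ nE) := hmax E hEface hDE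
    have hyE : (y : Fin d → ℤ) ∈ latIn d E := latIn_mono hDE.le y.2
    have h1 : nE • (y : Fin d → ℤ) ∈ latticeOf d S E := by
      have := ((latticeOf d S E).addSubgroupOf (latIn d E)).nsmul_index_mem
        (⟨(y : Fin d → ℤ), hyE⟩ : ↥(latIn d E))
      rw [AddSubgroup.mem_addSubgroupOf] at this
      exact this
    have h2 : (p : ℕ) • (y : Fin d → ℤ) ∈ latticeOf d S E :=
      latticeOf_mono S hDE.le hpy
    -- Bezout
    have hcop : Nat.Coprime p nE := (Nat.Prime.coprime_iff_not_dvd hp).mpr hpnE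
    obtain ⟨a, b, hab⟩ := (Nat.isCoprime_iff_coprime.mpr hcop : IsCoprime (p : ℤ) (nE : ℤ))
    have h1' : (nE : ℤ) • (y : Fin d → ℤ) ∈ latticeOf d S E := by
      rw [natCast_zsmul]; exact h1
    have h2' : ((p : ℕ) : ℤ) • (y : Fin d → ℤ) ∈ latticeOf d S E := by
      rw [natCast_zsmul]; exact h2
    have hy : (y : Fin d → ℤ) =
        a • (((p : ℕ) : ℤ) • (y : Fin d → ℤ)) + b • ((nE : ℤ) • (y : Fin d → ℤ)) := by
      rw [smul_smul, smul_smul, ← add_smul, hab, one_smul]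
    rw [hy]
    exact AddSubgroup.add_mem _ (AddSubgroup.zsmul_mem _ h2' _) (AddSubgroup.zsmul_mem _ h1' _)
  -- contradiction: q ≠ 0
  have : (QuotientAddGroup.mk' H) y = 0 := by
    rw [QuotientAddGroup.mk'_apply, QuotientAddGroup.eq_zero_iff, AddSubgroup.mem_addSubgroupOf]
    exact hyL
  rw [this] at hq
  simp at hq
  exact hp.ne_one hq.symm

lemma exists_pRUF {d p : ℕ} (hp : p.Prime) {S : AddSubmonoid (Fin d → ℤ)}
    {C : Set (Fin d → ℝ)}
    (hZ : AddSubgroup.closure (S : Set (Fin d → ℤ)) = ⊤) (hC : C = coneOf d S) :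
    ∀ (k : ℕ) (D' : Set (Fin d → ℝ)), IsFace d C D' → pFace d p S D' →
      d - Module.finrank ℝ (Submodule.span ℝ D') ≤ k →
      ∃ E, (IsRUF d S C E ∧ pFace d p S E) ∧ D' ⊆ E := by
  intro k
  induction k with
  | zero =>
    intro D' hface hpf hk
    by_cases hruf : IsRelSat d S C D'
    · exfalso
      have hnot : ¬ ∀ E : Set (Fin d → ℝ), IsFace d C E → D' ⊂ E → ¬ pFace d p S E :=
        fun h => core hp hC hface hruf h hpf
      push_neg at hnot
      obtain ⟨F, hFface, hDF, hFpf⟩ := hnot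
      have h1 : Module.finrank ℝ (Submodule.span ℝ D')
          < Module.finrank ℝ (Submodule.span ℝ F) :=
        Submodule.finrank_lt_finrank_of_lt (span_strict hface hFface hDF)
      have h2 : Module.finrank ℝ (Submodule.span ℝ F) ≤ d := by
        have := Submodule.finrank_le (Submodule.span ℝ F)
        simpa using this
      omega
    · exact ⟨D', ⟨⟨hface, hruf⟩, hpf⟩, subset_rfl⟩
  | succ n ih =>
    intro D' hface hpf hk
    by_cases hruf : IsRelSat d S C D'
    · -- not maximal: find bigger p-face
      have hnot : ¬ ∀ E : Set (Fin d → ℝ), IsFace d C E → D' ⊂ E → ¬ pFace d p S E :=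
        fun h => core hp hC hface hruf h hpf
      push_neg at hnot
      obtain ⟨F, hFface, hDF, hFpf⟩ := hnot
      have hmeas : d - Module.finrank ℝ (Submodule.span ℝ F) ≤ n := by
        have h1 : Module.finrank ℝ (Submodule.span ℝ D')
            < Module.finrank ℝ (Submodule.span ℝ F) :=
          Submodule.finrank_lt_finrank_of_lt (span_strict hface hFface hDF)
        have h2 : Module.finrank ℝ (Submodule.span ℝ F) ≤ d := by
          have := Submodule.finrank_le (Submodule.span ℝ F)
          simpa using this
        omega
      obtain ⟨E, hE, hFE⟩ := ih F hFface hFpf hmeas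
      exact ⟨E, hE, hDF.le.trans hFE⟩
    · exact ⟨D', ⟨⟨hface, hruf⟩, hpf⟩, subset_rfl⟩

/-- In a seminormal affine monoid with pointed cone `C` and prime `p`: a proper face
`D ⊊ C` is a maximal `p`-face (a `p`-face such that no strictly larger face is a
`p`-face) if and only if `D` is a maximal pRUF (a relatively unsaturated `p`-face not
properly contained in any pRUF). -/
theorem stmt_8 (d : ℕ) (p : ℕ) (hp : p.Prime)
    (S : AddSubmonoid (Fin d → ℤ)) (hfg : S.FG)
    (hZ : AddSubgroup.closure (S : Set (Fin d → ℤ)) = ⊤)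
    (C : Set (Fin d → ℝ)) (hC : C = coneOf d S)
    (hpointed : ∀ x ∈ C, -x ∈ C → x = 0)
    (hsn : Seminormal d S C)
    (D : Set (Fin d → ℝ)) (hD : IsFace d C D) (hne : D ≠ C) :
    (pFace d p S D ∧ ∀ D' : Set (Fin d → ℝ), IsFace d C D' → D ⊂ D' → ¬ pFace d p S D')
      ↔ ((IsRUF d S C D ∧ pFace d p S D) ∧
          ∀ D' : Set (Fin d → ℝ), IsRUF d S C D' ∧ pFace d p S D' → ¬ D ⊂ D') := by
  constructor
  · rintro ⟨hpf, hmax⟩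
    refine ⟨⟨⟨hD, fun hsat => core hp hC hD hsat hmax hpf⟩, hpf⟩, ?_⟩
    rintro D' ⟨⟨hface', -⟩, hpf'⟩ hlt
    exact hmax D' hface' hlt hpf'
  · rintro ⟨⟨hruf, hpf⟩, hnomax⟩
    refine ⟨hpf, fun D' hface' hlt hpf' => ?_⟩
    obtain ⟨E, hE, hsub⟩ := exists_pRUF hp hZ hC d D' hface' hpf' (Nat.sub_le _ _)
    exact hnomax E hE (hlt.trans_le hsub)

end
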